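/- Let H be a positive semidefinite n×n block matrix with each block a k×k complex matrix, and let tr₂H denote the n×n matrix whose (i,j) entry is the trace of the (i,j) block of H. Then (det(tr₂H)/k)^k ≥ det H. -/

import Mathlib

open Matrix BigOperators ComplexOrder

/-- Second partial trace: matrix of traces of the blocks. -/
noncomputable def ptrace2 {n k : ℕ} (H : Matrix (Fin n × Fin k) (Fin n × Fin k) ℂ) :
    Matrix (Fin n) (Fin n) ℂ :=
  Matrix.of fun i j => ∑ l : Fin k, H (i, l) (j, l)

namespace FMaux

open Finset

variable {α : Type*} [Fintype α] [DecidableEq α]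

lemma det_re_eq {A : Matrix α α ℂ} (hA : A.IsHermitian) :
    A.det.re = ∏ i, hA.eigenvalues i := by
  rw [hA.det_eq_prod_eigenvalues]
  norm_cast

lemma det_real {A : Matrix α α ℂ} (hA : A.IsHermitian) : A.det = (A.det.re : ℂ) := by
  rw [hA.det_eq_prod_eigenvalues]
  norm_cast

lemma det_im_zero {A : Matrix α α ℂ} (hA : A.IsHermitian) : A.det.im = 0 := by
  rw [det_real hA]; simp

lemma det_re_nonneg {A : Matrix α α ℂ} (hA : A.PosSemidef) : 0 ≤ A.det.re := by
  rw [det_re_eq hA.1]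
  exact Finset.prod_nonneg fun i _ => hA.eigenvalues_nonneg i

lemma one_add_prod_le {ι : Type*} (s : Finset ι) (hs : s.Nonempty) (f : ι → ℝ) :
    (∀ i ∈ s, 0 ≤ f i) → 1 + ∏ i ∈ s, f i ≤ ∏ i ∈ s, (1 + f i) := by
  induction hs using Finset.Nonempty.cons_induction with
  | singleton a => intro _; simp
  | cons a s ha hs ih =>
    intro hf
    rw [Finset.prod_cons, Finset.prod_cons]
    have hfa : 0 ≤ f a := hf a (Finset.mem_cons_self _ _)
    have hps : 0 ≤ ∏ i ∈ s, f i :=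
      Finset.prod_nonneg fun i hi => hf i (Finset.mem_cons_of_mem hi)
    have h1 := ih fun i hi => hf i (Finset.mem_cons_of_mem hi)
    nlinarith [mul_le_mul_of_nonneg_left h1 (by linarith : (0:ℝ) ≤ 1 + f a)]

lemma det_one_add_re [Nonempty α] {M : Matrix α α ℂ} (hM : M.PosSemidef) :
    1 + M.det.re ≤ (1 + M).det.re := by
  have hH := hM.1
  set U : Matrix α α ℂ := ↑(hH.eigenvectorUnitary) with hUdef
  set D : Matrix α α ℂ := diagonal (RCLike.ofReal ∘ hH.eigenvalues) with hDdef
  have hU : U * star U = 1 := Matrix.mem_unitaryGroup_iff.mp hH.eigenvectorUnitary.2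
  have h1 : (1 : Matrix α α ℂ) + M = U * (1 + D) * star U := by
    rw [mul_add, mul_one, add_mul, hU]
    exact congrArg (1 + ·) hH.spectral_theorem
  have hdet : (1 + M).det = (1 + D).det := by
    rw [h1, det_mul, det_mul, mul_right_comm, ← det_mul, hU, det_one, one_mul]
  have h2 : (1 + D).det = ((∏ i, (1 + hH.eigenvalues i) : ℝ) : ℂ) := by
    rw [hDdef, ← diagonal_one, diagonal_add, det_diagonal]
    push_cast
    rfl
  have h3 : (1 + M).det.re = ∏ i, (1 + hH.eigenvalues i) := by
    rw [hdet, h2, Complex.ofReal_re]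
  rw [h3, det_re_eq hH]
  exact one_add_prod_le univ univ_nonempty _ fun i _ => hM.eigenvalues_nonneg i

lemma exists_ker {A : Matrix α α ℂ} (hA : A.PosSemidef) (h : ¬ A.PosDef) :
    ∃ x, x ≠ 0 ∧ A *ᵥ x = 0 := by
  have h2 : ¬ ∀ x : α → ℂ, x ≠ 0 → 0 < star x ⬝ᵥ A *ᵥ x := fun hall => h (posDef_iff_dotProduct_mulVec.mpr ⟨hA.1, hall⟩)
  push_neg at h2
  obtain ⟨x, hx, hle⟩ := h2
  refine ⟨x, hx, (hA.dotProduct_mulVec_zero_iff x).mp ?_⟩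
  rcases (hA.dotProduct_mulVec_nonneg x).lt_or_eq with hlt | heq
  · exact absurd hlt hle
  · exact heq.symm

lemma superadd_posdef [Nonempty α] {A B : Matrix α α ℂ} (hA : A.PosDef) (hB : B.PosSemidef) :
    A.det.re + B.det.re ≤ (A + B).det.re := by
  set S := (open scoped MatrixOrder in CFC.sqrt A) with hSdef
  have hS : S.PosSemidef := by
    open scoped MatrixOrder in exact nonneg_iff_posSemidef.mp (CFC.sqrt_nonneg A)
  have hSS : S * S = A := by
    open scoped MatrixOrder in
      exact CFC.sqrt_mul_sqrt_self A (nonneg_iff_posSemidef.mpr hA.posSemidef)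
  have hSdet : S.det ≠ 0 := by
    intro h
    exact hA.det_pos.ne' (by rw [← hSS, det_mul, h, zero_mul])
  have hSinv : S * S⁻¹ = 1 := mul_nonsing_inv S hSdet.isUnit
  have hSinv' : S⁻¹ * S = 1 := nonsing_inv_mul S hSdet.isUnit
  have hSinvH : (S⁻¹).IsHermitian := hS.1.inv
  set M := S⁻¹ * B * S⁻¹ with hMdef
  have hMpsd : M.PosSemidef := by
    have := hB.conjTranspose_mul_mul_same S⁻¹
    rwa [hSinvH.eq] at this
  have hSMS : S * M * S = B := by
    rw [hMdef, ← mul_assoc, ← mul_assoc, hSinv, one_mul, mul_assoc, hSinv', mul_one]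
  have hABM : A + B = S * (1 + M) * S := by
    rw [mul_add, mul_one, add_mul, hSS, hSMS]
  have hM1H : (1 + M).IsHermitian := isHermitian_one.add hMpsd.1
  have hABdet : (A + B).det.re = S.det.re * (1 + M).det.re * S.det.re := by
    have : (A + B).det = S.det * (1 + M).det * S.det := by rw [hABM, det_mul, det_mul]
    rw [this]
    simp [Complex.mul_re, det_im_zero hS.1, det_im_zero hM1H]
  have hBdet : B.det.re = S.det.re * M.det.re * S.det.re := by
    have : B.det = S.det * M.det * S.det := by rw [← hSMS, det_mul, det_mul]
    rw [this]
    simp [Complex.mul_re, det_im_zero hS.1, det_im_zero hMpsd.1]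
  have hAdet : A.det.re = S.det.re * S.det.re := by
    have : A.det = S.det * S.det := by rw [← hSS, det_mul]
    rw [this]
    simp [Complex.mul_re, det_im_zero hS.1]
  have hs : 0 ≤ S.det.re := det_re_nonneg hS
  have hm : 0 ≤ M.det.re := det_re_nonneg hMpsd
  have ht : 1 + M.det.re ≤ (1 + M).det.re := det_one_add_re hMpsd
  rw [hABdet, hBdet, hAdet]
  nlinarith [mul_nonneg (mul_nonneg hs (sub_nonneg.2 ht)) hs]

lemma superadd [Nonempty α] {A B : Matrix α α ℂ} (hA : A.PosSemidef) (hB : B.PosSemidef) :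
    A.det.re + B.det.re ≤ (A + B).det.re := by
  by_cases hApd : A.PosDef
  · exact superadd_posdef hApd hB
  by_cases hBpd : B.PosDef
  · have := superadd_posdef hBpd hA
    rw [add_comm B A] at this
    linarith
  · obtain ⟨x, hx, hAx⟩ := exists_ker hA hApd
    obtain ⟨y, hy, hBy⟩ := exists_ker hB hBpd
    have hA0 : A.det = 0 := Matrix.exists_mulVec_eq_zero_iff.mp ⟨x, hx, hAx⟩
    have hB0 : B.det = 0 := Matrix.exists_mulVec_eq_zero_iff.mp ⟨y, hy, hBy⟩
    have := det_re_nonneg (hA.add hB)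
    rw [hA0, hB0]
    simpa using this

lemma det_add_mono {A B : Matrix α α ℂ} (hA : A.PosSemidef) (hB : B.PosSemidef) :
    B.det.re ≤ (A + B).det.re := by
  cases isEmpty_or_nonempty α with
  | inl h => simp [det_isEmpty]
  | inr h =>
    have h1 := superadd hA hB
    have h2 := det_re_nonneg hA
    linarith

lemma psd_sum {ι : Type*} (s : Finset ι) (B : ι → Matrix α α ℂ)
    (hB : ∀ i ∈ s, (B i).PosSemidef) : (∑ i ∈ s, B i).PosSemidef :=
  Finset.sum_induction B _ (fun _ _ ha hb => ha.add hb) (PosSemidef.zero) hB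

lemma superadd_sum [Nonempty α] {ι : Type*} (s : Finset ι) (hs : s.Nonempty)
    (B : ι → Matrix α α ℂ) :
    (∀ i ∈ s, (B i).PosSemidef) → ∑ i ∈ s, (B i).det.re ≤ (∑ i ∈ s, B i).det.re := by
  induction hs using Finset.Nonempty.cons_induction with
  | singleton a => intro _; simp
  | cons a s ha hs ih =>
    intro hB
    rw [Finset.sum_cons, Finset.sum_cons]
    have h1 := ih fun i hi => hB i (Finset.mem_cons_of_mem hi)
    have h2 := superadd (hB a (Finset.mem_cons_self _ _))
      (psd_sum s B fun i hi => hB i (Finset.mem_cons_of_mem hi))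
    linarith

lemma fischer2 {m l : Type*} [Fintype m] [Fintype l] [DecidableEq m] [DecidableEq l]
    {M : Matrix (m ⊕ l) (m ⊕ l) ℂ} (hM : M.PosSemidef) :
    M.det.re ≤ M.toBlocks₁₁.det.re * M.toBlocks₂₂.det.re := by
  set A := M.toBlocks₁₁ with hAdef
  set B := M.toBlocks₁₂ with hBdef
  set D := M.toBlocks₂₂ with hDdef
  have hC : M.toBlocks₂₁ = Bᴴ := by
    ext i j
    simpa [toBlocks₂₁, hBdef, toBlocks₁₂] using (congrFun (congrFun hM.1.eq (Sum.inr i)) (Sum.inl j)).symm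
  have hMeq : M = fromBlocks A B Bᴴ D := by rw [← hC, fromBlocks_toBlocks]
  have hApsd : A.PosSemidef := by
    have := hM.submatrix (Sum.inl : m → m ⊕ l)
    convert this using 1
    ext i j; rfl
  have hDpsd : D.PosSemidef := by
    have := hM.submatrix (Sum.inr : l → m ⊕ l)
    convert this using 1
    ext i j; rfl
  by_cases hApd : A.PosDef
  · haveI : Invertible A := A.invertibleOfIsUnitDet hApd.det_pos.ne'.isUnit
    have hM' : (fromBlocks A B Bᴴ D).PosSemidef := hMeq ▸ hM
    have hS : (D - Bᴴ * A⁻¹ * B).PosSemidef := (PosDef.fromBlocks₁₁ B D hApd).mp hM'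
    have hX : (Bᴴ * A⁻¹ * B).PosSemidef := by
      simpa using (hApd.posSemidef.inv).conjTranspose_mul_mul_same B
    have hdet : M.det = A.det * (D - Bᴴ * A⁻¹ * B).det := by
      rw [hMeq, det_fromBlocks₁₁, invOf_eq_nonsing_inv]
    have hmono : (D - Bᴴ * A⁻¹ * B).det.re ≤ D.det.re := by
      have := det_add_mono hX hS
      rwa [add_sub_cancel] at this
    have hre : M.det.re = A.det.re * (D - Bᴴ * A⁻¹ * B).det.re := by
      rw [hdet]
      simp [Complex.mul_re, det_im_zero hApd.1, det_im_zero hS.1]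
    rw [hre]
    exact mul_le_mul_of_nonneg_left hmono (det_re_nonneg hApsd)
  · obtain ⟨x, hx, hAx⟩ := exists_ker hApsd hApd
    set y : m ⊕ l → ℂ := Sum.elim x 0 with hydef
    have hy : y ≠ 0 := by
      intro h
      exact hx (funext fun i => congrFun h (Sum.inl i))
    have hMy : star y ⬝ᵥ M *ᵥ y = 0 := by
      rw [hMeq, hydef]
      simp [Function.star_sumElim, fromBlocks_mulVec, sumElim_dotProduct_sumElim, hAx]
    have hM0 : M.det = 0 :=
      Matrix.exists_mulVec_eq_zero_iff.mp ⟨y, hy, (hM.dotProduct_mulVec_zero_iff y).mp hMy⟩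
    have hA0 : A.det = 0 := Matrix.exists_mulVec_eq_zero_iff.mp ⟨x, hx, hAx⟩
    rw [hM0, hA0]
    simp [mul_nonneg, det_re_nonneg hDpsd]

/-- The `l`-th diagonal slice of a block matrix. -/
noncomputable def slice {n k : ℕ} (H : Matrix (Fin n × Fin k) (Fin n × Fin k) ℂ) (l : Fin k) :
    Matrix (Fin n) (Fin n) ℂ :=
  H.submatrix (fun i => (i, l)) (fun i => (i, l))

lemma fischerK (n : ℕ) : ∀ (k : ℕ) (H : Matrix (Fin n × Fin k) (Fin n × Fin k) ℂ),
    H.PosSemidef → H.det.re ≤ ∏ l : Fin k, (slice H l).det.re := by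
  intro k
  induction k with
  | zero =>
    intro H hH
    haveI : IsEmpty (Fin n × Fin 0) := ⟨fun p => p.2.elim0⟩
    simp [Matrix.det_isEmpty]
  | succ k ih =>
    intro H hH
    set e : (Fin n × Fin (k+1)) ≃ (Fin n × Fin k) ⊕ (Fin n × Fin 1) :=
      ((Equiv.refl (Fin n)).prodCongr finSumFinEquiv.symm).trans
        (Equiv.prodSumDistrib (Fin n) (Fin k) (Fin 1)) with hedef
    set M := H.submatrix e.symm e.symm with hMdef
    have hM : M.PosSemidef := hH.submatrix e.symm
    have hdet : M.det = H.det := det_submatrix_equiv_self e.symm H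
    have hsymm1 : ∀ p : Fin n × Fin k, e.symm (Sum.inl p) = (p.1, Fin.castAdd 1 p.2) := by
      intro p; simp [hedef]
    have hsymm2 : ∀ p : Fin n × Fin 1, e.symm (Sum.inr p) = (p.1, Fin.natAdd k p.2) := by
      intro p; simp [hedef]
    set H₀ := H.submatrix (fun p : Fin n × Fin k => (p.1, Fin.castAdd 1 p.2))
      (fun p : Fin n × Fin k => (p.1, Fin.castAdd 1 p.2)) with hH₀def
    have h11 : M.toBlocks₁₁ = H₀ := by
      ext p q
      simp [toBlocks₁₁, hMdef, hsymm1, hH₀def]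
    have h22 : M.toBlocks₂₂ =
        (slice H (Fin.last k)).submatrix (Equiv.prodUnique (Fin n) (Fin 1))
          (Equiv.prodUnique (Fin n) (Fin 1)) := by
      ext p q
      have hp : Fin.natAdd k p.2 = Fin.last k := by
        apply Fin.ext
        simp [Fin.natAdd, Fin.last, Fin.val_eq_zero]
      have hq : Fin.natAdd k q.2 = Fin.last k := by
        apply Fin.ext
        simp [Fin.natAdd, Fin.last, Fin.val_eq_zero]
      simp [toBlocks₂₂, hMdef, hsymm2, slice, hp, hq, Equiv.prodUnique]
    have hH₀psd : H₀.PosSemidef := hH.submatrix _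
    have hIH := ih H₀ hH₀psd
    have hslice : ∀ l : Fin k, slice H₀ l = slice H (Fin.castSucc l) := by
      intro l; rfl
    have h22det : M.toBlocks₂₂.det = (slice H (Fin.last k)).det := by
      rw [h22, det_submatrix_equiv_self]
    have hfi := fischer2 hM
    rw [h11, h22det, hdet] at hfi
    have h22psd : (slice H (Fin.last k)).PosSemidef := hH.submatrix _
    calc H.det.re ≤ H₀.det.re * (slice H (Fin.last k)).det.re := hfi
      _ ≤ (∏ l : Fin k, (slice H₀ l).det.re) * (slice H (Fin.last k)).det.re :=
          mul_le_mul_of_nonneg_right hIH (det_re_nonneg h22psd)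
      _ = ∏ l : Fin (k+1), (slice H l).det.re := by
          rw [Fin.prod_univ_castSucc]
          simp only [hslice]

lemma amgm (k : ℕ) (hk : 0 < k) (d : Fin k → ℝ) (hd : ∀ l, 0 ≤ d l) :
    ∏ l, d l ≤ ((∑ l, d l) / k) ^ k := by
  have hk' : (k : ℝ) ≠ 0 := Nat.cast_ne_zero.mpr hk.ne'
  have hgm := Real.geom_mean_le_arith_mean_weighted univ (fun _ => 1 / k) d
    (fun i _ => by positivity) (by simp [hk']) (fun i _ => hd i)
  have hprod : ∏ l, d l ^ (1 / (k:ℝ)) = (∏ l, d l) ^ (1 / (k:ℝ)) :=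
    Real.finset_prod_rpow univ d (fun i _ => hd i) _
  have hsum : ∑ l : Fin k, (1 / (k:ℝ)) * d l = (∑ l, d l) / k := by
    rw [← Finset.mul_sum]; ring
  rw [hprod, hsum] at hgm
  have hP : 0 ≤ ∏ l, d l := Finset.prod_nonneg fun i _ => hd i
  have h1 : ((∏ l, d l) ^ (1 / (k:ℝ))) ^ k ≤ ((∑ l, d l) / k) ^ k :=
    pow_le_pow_left₀ (Real.rpow_nonneg hP _) hgm k
  calc ∏ l, d l = ((∏ l, d l) ^ (1 / (k:ℝ))) ^ k := by
        rw [← Real.rpow_natCast ((∏ l, d l) ^ (1 / (k:ℝ))) k, ← Real.rpow_mul hP,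
          one_div, inv_mul_cancel₀ hk', Real.rpow_one]
    _ ≤ _ := h1

end FMaux

/-- Fiedler–Markham: (det(tr₂H)/k)^k ≥ det H. -/
theorem stmt0 {n k : ℕ} (hn : 0 < n) (hk : 0 < k)
    (H : Matrix (Fin n × Fin k) (Fin n × Fin k) ℂ) (hH : H.PosSemidef) :
    ((ptrace2 H).det.re / k) ^ k ≥ H.det.re := by
  haveI : Nonempty (Fin n) := Fin.pos_iff_nonempty.mp hn
  haveI : Nonempty (Fin k) := Fin.pos_iff_nonempty.mp hk
  have hSl : ∀ l, (FMaux.slice H l).PosSemidef := fun l => hH.submatrix _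
  have hpt : ptrace2 H = ∑ l, FMaux.slice H l := by
    ext i j
    simp [ptrace2, FMaux.slice, Matrix.sum_apply]
  set d : Fin k → ℝ := fun l => (FMaux.slice H l).det.re with hddef
  have hd : ∀ l, 0 ≤ d l := fun l => FMaux.det_re_nonneg (hSl l)
  have hfk : H.det.re ≤ ∏ l, d l := FMaux.fischerK n k H hH
  have hsum : ∑ l, d l ≤ (ptrace2 H).det.re := by
    rw [hpt]
    exact FMaux.superadd_sum Finset.univ Finset.univ_nonempty _ (fun l _ => hSl l)
  have hamgm : ∏ l, d l ≤ ((∑ l, d l) / k) ^ k := FMaux.amgm k hk d hd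
  have hmono : ((∑ l, d l) / k) ^ k ≤ ((ptrace2 H).det.re / k) ^ k := by
    have h0 : 0 ≤ (∑ l, d l) / k :=
      div_nonneg (Finset.sum_nonneg fun l _ => hd l) (Nat.cast_nonneg k)
    have h1 : (∑ l, d l) / k ≤ (ptrace2 H).det.re / k := by
      apply div_le_div_of_nonneg_right hsum
      exact Nat.cast_nonneg k
    exact pow_le_pow_left₀ h0 h1 k
  exact le_trans (le_trans hfk hamgm) hmono
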